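/- arXiv:1106.3151 — 2 statements merged into one kernel-verified Lean document; each statement's English description precedes it below -/
import Mathlib

section
/- Let f : (ℂ^m, 0) → ℂ be a germ of a holomorphic function, and suppose u : (ℂ^r, 0) → (ℂ^m, 0) and v : (ℂ^s, 0) → (ℂ^m, 0) are germs of holomorphic maps with v(x^{[s]}) obtained from u by setting certain variables equal to each other (precisely: s < r and v(y) = u(ι(y)) for a linear 'duplication' map ι). If f ∘ u satisfies a nontrivial polynomial relation Σ_{r=0}^e δ_r · (f∘u)^r = 0 with holomorphic coefficients δ_r and δ_e ≢ 0, then by applying a partial derivative ∂^ν of minimal order (chosen so that some ∂^ν δ_r does not vanish identically after the substitution) and substituting, f ∘ v satisfies a nontrivial polynomial relation Σ_{r=0}^e δ̂_r · (f∘v)^r = 0 where each δ̂_r is a partial derivative of δ_r composed with ι. -/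
open Filter Topology

namespace StepDownAux


variable {r : ℕ}

noncomputable def dd (i : Fin r) (g : (Fin r → ℂ) → ℂ) : (Fin r → ℂ) → ℂ :=
  fun x => fderiv ℂ g x (Pi.single i 1)

noncomputable def DD : List (Fin r) → ((Fin r → ℂ) → ℂ) → ((Fin r → ℂ) → ℂ)
  | [], g => g
  | i :: l, g => dd i (DD l g)

lemma analyticAt_dd (i : Fin r) {g : (Fin r → ℂ) → ℂ} {x : Fin r → ℂ}
    (hg : AnalyticAt ℂ g x) : AnalyticAt ℂ (dd i g) x := by
  exact ((ContinuousLinearMap.apply ℂ ℂ (Pi.single i (1:ℂ))).analyticAt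
      (fderiv ℂ g x)).comp hg.fderiv

lemma analyticAt_DD (l : List (Fin r)) {g : (Fin r → ℂ) → ℂ} {x : Fin r → ℂ}
    (hg : AnalyticAt ℂ g x) : AnalyticAt ℂ (DD l g) x := by
  induction l generalizing x with
  | nil => exact hg
  | cons i l ih => exact analyticAt_dd i (ih hg)

lemma dd_congr {i : Fin r} {g h : (Fin r → ℂ) → ℂ} {x : Fin r → ℂ}
    (hgh : g =ᶠ[𝓝 x] h) : dd i g x = dd i h x := by
  unfold dd; rw [hgh.fderiv_eq]

lemma dd_add {i : Fin r} {g h : (Fin r → ℂ) → ℂ} {x : Fin r → ℂ}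
    (hg : DifferentiableAt ℂ g x) (hh : DifferentiableAt ℂ h x) :
    dd i (fun z => g z + h z) x = dd i g x + dd i h x := by
  unfold dd; rw [fderiv_fun_add hg hh]; simp

lemma dd_mul {i : Fin r} {g h : (Fin r → ℂ) → ℂ} {x : Fin r → ℂ}
    (hg : DifferentiableAt ℂ g x) (hh : DifferentiableAt ℂ h x) :
    dd i (fun z => g z * h z) x = dd i g x * h x + g x * dd i h x := by
  unfold dd; rw [fderiv_fun_mul hg hh]; simp [smul_eq_mul]; ring

lemma dd_sum {i : Fin r} {s : Finset ℕ} {g : ℕ → (Fin r → ℂ) → ℂ} {x : Fin r → ℂ}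
    (h : ∀ j ∈ s, DifferentiableAt ℂ (g j) x) :
    dd i (fun z => ∑ j ∈ s, g j z) x = ∑ j ∈ s, dd i (g j) x := by
  unfold dd; rw [fderiv_fun_sum h]; simp

lemma iteratedFDeriv_eq_DD : ∀ (n : ℕ) {g : (Fin r → ℂ) → ℂ} {x : Fin r → ℂ}
    (_ : AnalyticAt ℂ g x) (dir : Fin n → Fin r),
    iteratedFDeriv ℂ n g x (fun i => Pi.single (dir i) 1) = DD (List.ofFn dir) g x
  | 0, g, x, hg, dir => by
    simp [DD, List.ofFn_zero, iteratedFDeriv_zero_apply]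
  | (n+1), g, x, hg, dir => by
    have hΦ : AnalyticAt ℂ (iteratedFDeriv ℂ n g) x := by
      obtain ⟨s, hs, h⟩ := hg.exists_mem_nhds_analyticOnNhd
      exact (h.iteratedFDeriv n) x (mem_of_mem_nhds hs)
    set w : Fin n → (Fin r → ℂ) := fun i => Pi.single (dir i.succ) (1:ℂ) with hw
    set A := ContinuousMultilinearMap.apply ℂ (fun _ : Fin n => (Fin r → ℂ)) ℂ w with hA
    have hfd : fderiv ℂ (fun y => A (iteratedFDeriv ℂ n g y)) x
        = A.comp (fderiv ℂ (iteratedFDeriv ℂ n g) x) :=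
      (A.hasFDerivAt.comp x hΦ.differentiableAt.hasFDerivAt).fderiv
    have hev : (fun y => A (iteratedFDeriv ℂ n g y)) =ᶠ[𝓝 x]
        DD (List.ofFn fun i : Fin n => dir i.succ) g :=
      hg.eventually_analyticAt.mono (fun z hz => iteratedFDeriv_eq_DD n hz _)
    have h1 : iteratedFDeriv ℂ (n+1) g x (fun i => Pi.single (dir i) 1)
        = (fderiv ℂ (iteratedFDeriv ℂ n g) x (Pi.single (dir 0) 1)) w := by
      rw [iteratedFDeriv_succ_apply_left]; rfl
    rw [h1]
    have h2 : (fderiv ℂ (iteratedFDeriv ℂ n g) x (Pi.single (dir 0) 1)) w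
        = fderiv ℂ (fun y => A (iteratedFDeriv ℂ n g y)) x (Pi.single (dir 0) 1) := by
      rw [hfd]; rfl
    rw [h2, hev.fderiv_eq, List.ofFn_succ]
    rfl

lemma DD_eqOn_zero {U : Set (Fin r → ℂ)} (hU : IsOpen U) {g : (Fin r → ℂ) → ℂ}
    (hg : ∀ x ∈ U, g x = 0) : ∀ (l : List (Fin r)), ∀ x ∈ U, DD l g x = 0
  | [] => hg
  | i :: l => by
    intro x hx
    have hev : DD l g =ᶠ[𝓝 x] (fun _ => (0:ℂ)) :=
      eventually_of_mem (hU.mem_nhds hx) (DD_eqOn_zero hU hg l)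
    show fderiv ℂ (DD l g) x (Pi.single i 1) = 0
    rw [hev.fderiv_eq]
    simp


inductive Small (e : ℕ) (δ : ℕ → (Fin r → ℂ) → ℂ) (U : Set (Fin r → ℂ)) :
    ℕ → ((Fin r → ℂ) → ℂ) → Prop
  | base {t : ℕ} (l : List (Fin r)) (j : ℕ) (c : (Fin r → ℂ) → ℂ) (hl : l.length < t)
      (hj : j ≤ e) (hc : ∀ x ∈ U, AnalyticAt ℂ c x) :
      Small e δ U t (fun x => DD l (δ j) x * c x)
  | zero (t : ℕ) : Small e δ U t (fun _ => 0)
  | add {t : ℕ} {g h : (Fin r → ℂ) → ℂ} : Small e δ U t g → Small e δ U t h →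
      Small e δ U t (fun x => g x + h x)

variable {e : ℕ} {δ : ℕ → (Fin r → ℂ) → ℂ} {U : Set (Fin r → ℂ)}

lemma Small.analytic (hδU : ∀ j ≤ e, ∀ x ∈ U, AnalyticAt ℂ (δ j) x)
    {t : ℕ} {g : (Fin r → ℂ) → ℂ} (h : Small e δ U t g) :
    ∀ x ∈ U, AnalyticAt ℂ g x := by
  induction h with
  | base l j c hl hj hc => exact fun x hx => (analyticAt_DD l (hδU j hj x hx)).mul (hc x hx)
  | zero => exact fun x hx => analyticAt_const
  | add _ _ ih1 ih2 => exact fun x hx => (ih1 x hx).add (ih2 x hx)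

lemma Small.sum {t : ℕ} {s : Finset ℕ} {g : ℕ → (Fin r → ℂ) → ℂ}
    (h : ∀ j ∈ s, Small e δ U t (g j)) : Small e δ U t (fun x => ∑ j ∈ s, g j x) := by
  classical
  induction s using Finset.induction_on with
  | empty => simpa using Small.zero t
  | insert a s ha ih =>
    have he : (fun x => ∑ j ∈ insert a s, g j x) = fun x => g a x + ∑ j ∈ s, g j x := by
      funext x; rw [Finset.sum_insert ha]
    rw [he]
    exact Small.add (h a (Finset.mem_insert_self a s))
      (ih fun j hj => h j (Finset.mem_insert_of_mem hj))

lemma Small.dd_exists (hδU : ∀ j ≤ e, ∀ x ∈ U, AnalyticAt ℂ (δ j) x) (i : Fin r)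
    {t : ℕ} {g : (Fin r → ℂ) → ℂ} (h : Small e δ U t g) :
    ∃ g', Small e δ U (t+1) g' ∧ ∀ x ∈ U, dd i g x = g' x := by
  induction h with
  | base l j c hl hj hc =>
    refine ⟨fun x => DD (i :: l) (δ j) x * c x + DD l (δ j) x * dd i c x,
      Small.add (Small.base (i::l) j c (by simpa using Nat.succ_lt_succ hl) hj hc)
        (Small.base l j (dd i c) (hl.trans (Nat.lt_succ_self _)) hj
          (fun x hx => analyticAt_dd i (hc x hx))), fun x hx => ?_⟩
    rw [dd_mul ((analyticAt_DD l (hδU j hj x hx)).differentiableAt)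
      ((hc x hx).differentiableAt)]
    rfl
  | zero =>
    exact ⟨fun _ => 0, Small.zero _, fun x hx => by simp [dd]⟩
  | add hg hh ih1 ih2 =>
    obtain ⟨g1, hg1, e1⟩ := ih1
    obtain ⟨g2, hg2, e2⟩ := ih2
    refine ⟨fun x => g1 x + g2 x, Small.add hg1 hg2, fun x hx => ?_⟩
    rw [dd_add ((hg.analytic hδU x hx).differentiableAt)
      ((hh.analytic hδU x hx).differentiableAt), e1 x hx, e2 x hx]

lemma Small.vanish {k s : ℕ} (ι : (Fin s → ℂ) →ₗ[ℂ] (Fin r → ℂ))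
    (Hmin : ∀ l : List (Fin r), l.length < k → ∀ j ≤ e,
      ∀ᶠ y in 𝓝 (0 : Fin s → ℂ), DD l (δ j) (ι y) = 0)
    {t : ℕ} {g : (Fin r → ℂ) → ℂ} (h : Small e δ U t g) (ht : t ≤ k) :
    ∀ᶠ y in 𝓝 (0 : Fin s → ℂ), g (ι y) = 0 := by
  induction h with
  | base l j c hl hj hc =>
    exact (Hmin l (lt_of_lt_of_le hl ht) j hj).mono fun y hy => by simp [hy]
  | zero => exact Filter.Eventually.of_forall fun _ => rfl
  | add _ _ ih1 ih2 =>
    filter_upwards [ih1, ih2] with y h1 h2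
    show _ + _ = (0:ℂ)
    rw [h1, h2, add_zero]

end StepDownAux


open StepDownAux in
/-- (The 'step-down' differentiation trick of Lemma `l:induction`.)
Let `f : (ℂ^m, 0) → ℂ` be holomorphic, `u : (ℂ^r, 0) → (ℂ^m, 0)` holomorphic, and
`v = u ∘ ι` for an injective linear 'duplication' map `ι : ℂ^s → ℂ^r` (`s < r`).  If
`f ∘ u` satisfies a nontrivial polynomial relation `∑ j δ_j · (f ∘ u)^j = 0` with
holomorphic coefficients `δ_j` and `δ_e ≢ 0`, then `f ∘ v` satisfies a nontrivial
polynomial relation `∑ j δ̂_j · (f ∘ v)^j = 0`, where each `δ̂_j` is a (common) iterated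
partial derivative of `δ_j` composed with `ι`. -/
theorem step_down_relation (m r s : ℕ) (hs : s < r)
    (ι : (Fin s → ℂ) →ₗ[ℂ] (Fin r → ℂ)) (hι : Function.Injective ι)
    (f : (Fin m → ℂ) → ℂ) (hf : AnalyticAt ℂ f 0)
    (u : (Fin r → ℂ) → (Fin m → ℂ)) (hu : AnalyticAt ℂ u 0) (hu0 : u 0 = 0)
    (e : ℕ) (δ : ℕ → (Fin r → ℂ) → ℂ) (hδ : ∀ j, AnalyticAt ℂ (δ j) 0)
    (hrel : ∀ᶠ x in 𝓝 (0 : Fin r → ℂ),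
      ∑ j ∈ Finset.range (e + 1), δ j x * f (u x) ^ j = 0)
    (hne : ¬ ∀ᶠ x in 𝓝 (0 : Fin r → ℂ), δ e x = 0) :
    ∃ (k : ℕ) (dir : Fin k → Fin r),
      (∃ j ≤ e, ¬ ∀ᶠ y in 𝓝 (0 : Fin s → ℂ),
        iteratedFDeriv ℂ k (δ j) (ι y) (fun i => Pi.single (dir i) 1) = 0) ∧
      ∀ᶠ y in 𝓝 (0 : Fin s → ℂ),
        ∑ j ∈ Finset.range (e + 1),
          iteratedFDeriv ℂ k (δ j) (ι y) (fun i => Pi.single (dir i) 1)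
            * f (u (ι y)) ^ j = 0 := by
  classical
  set F : (Fin r → ℂ) → ℂ := fun x => f (u x) with hFdef
  have hFa : AnalyticAt ℂ F 0 := by
    have hf' : AnalyticAt ℂ f (u 0) := by rw [hu0]; exact hf
    exact hf'.comp hu
  set G : (Fin r → ℂ) → ℂ := fun x => ∑ j ∈ Finset.range (e + 1), δ j x * F x ^ j with hGdef
  -- choose a good open neighborhood U
  have hev : ∀ᶠ x in 𝓝 (0 : Fin r → ℂ), (G x = 0 ∧ AnalyticAt ℂ F x ∧
      ∀ j ∈ Finset.range (e + 1), AnalyticAt ℂ (δ j) x) :=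
    hrel.and (hFa.eventually_analyticAt.and
      ((Filter.eventually_all_finset _).2 fun j _ => (hδ j).eventually_analyticAt))
  obtain ⟨U, hUprop, hUopen, hU0⟩ := eventually_nhds_iff.mp hev
  have hG0 : ∀ x ∈ U, G x = 0 := fun x hx => (hUprop x hx).1
  have hFU : ∀ x ∈ U, AnalyticAt ℂ F x := fun x hx => (hUprop x hx).2.1
  have hδU : ∀ j ≤ e, ∀ x ∈ U, AnalyticAt ℂ (δ j) x := fun j hj x hx =>
    (hUprop x hx).2.2 j (Finset.mem_range.2 (Nat.lt_succ_of_le hj))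
  -- continuity of ι
  have hι0 : Tendsto (fun y => ι y) (𝓝 (0 : Fin s → ℂ)) (𝓝 (0 : Fin r → ℂ)) := by
    have := (ι.continuous_of_finiteDimensional).tendsto (0 : Fin s → ℂ)
    simpa [map_zero] using this
  -- existence of k
  have hex : ∃ k : ℕ, ∃ dir : Fin k → Fin r, ∃ j ≤ e, ¬ ∀ᶠ y in 𝓝 (0 : Fin s → ℂ),
      iteratedFDeriv ℂ k (δ j) (ι y) (fun i => Pi.single (dir i) 1) = 0 := by
    by_contra hcon
    push_neg at hcon
    apply hne
    have h0 : ∀ (k : ℕ) (dir : Fin k → Fin r),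
        iteratedFDeriv ℂ k (δ e) 0 (fun i => Pi.single (dir i) 1) = 0 := by
      intro k dir
      have := (hcon k dir e le_rfl).self_of_nhds
      simpa [map_zero] using this
    have h1 : ∀ (k : ℕ) (v : Fin k → Fin r → ℂ), iteratedFDeriv ℂ k (δ e) 0 v = 0 := by
      intro k v
      have hm : v = fun i => ∑ t : Fin r, v i t • (Pi.single t (1:ℂ) : Fin r → ℂ) := by
        funext i
        symm
        simp_rw [← Pi.single_smul, smul_eq_mul, mul_one]
        exact Finset.univ_sum_single (v i)
      calc iteratedFDeriv ℂ k (δ e) 0 v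
          = iteratedFDeriv ℂ k (δ e) 0 (fun i => ∑ t : Fin r, v i t • (Pi.single t (1:ℂ) : Fin r → ℂ)) := by
            conv_lhs => rw [hm]
        _ = ∑ p : Fin k → Fin r, iteratedFDeriv ℂ k (δ e) 0
              (fun i => v i (p i) • (Pi.single (p i) (1:ℂ) : Fin r → ℂ)) :=
            (iteratedFDeriv ℂ k (δ e) 0).map_sum
              (g := fun (i : Fin k) (t : Fin r) => v i t • (Pi.single t (1:ℂ) : Fin r → ℂ))
        _ = ∑ p : Fin k → Fin r, (∏ i, v i (p i)) •
              iteratedFDeriv ℂ k (δ e) 0 (fun i => Pi.single (p i) (1:ℂ)) :=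
            Finset.sum_congr rfl fun p _ =>
              (iteratedFDeriv ℂ k (δ e) 0).map_smul_univ _ _
        _ = 0 := by simp [h0]
    obtain ⟨p, hp⟩ := hδ e
    obtain ⟨rad, hb⟩ := hp
    filter_upwards [EMetric.ball_mem_nhds (0 : Fin r → ℂ) hb.r_pos] with y hy
    have hsum := hb.hasSum_iteratedFDeriv (by simpa using hy)
    have hz : (fun n => ((Nat.factorial n : ℕ) : ℂ)⁻¹ • iteratedFDeriv ℂ n (δ e) 0 (fun _ => y))
        = fun _ => (0:ℂ) := by
      funext n; rw [h1]; simp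
    rw [hz] at hsum
    have := hsum.unique hasSum_zero
    simpa using this
  -- minimal k
  obtain ⟨dir, j0, hj0e, hj0⟩ := Nat.find_spec hex
  have hmin : ∀ k' < Nat.find hex, ∀ (dir' : Fin k' → Fin r), ∀ j ≤ e, ∀ᶠ y in 𝓝 (0 : Fin s → ℂ),
      iteratedFDeriv ℂ k' (δ j) (ι y) (fun i => Pi.single (dir' i) 1) = 0 := by
    intro k' hk' dir' j hj
    by_contra hcontra
    exact Nat.find_min hex hk' ⟨dir', j, hj, hcontra⟩
  have HminDD : ∀ l : List (Fin r), l.length < Nat.find hex → ∀ j ≤ e,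
      ∀ᶠ y in 𝓝 (0 : Fin s → ℂ), DD l (δ j) (ι y) = 0 := by
    intro l hl j hj
    have hev2 : ∀ᶠ y in 𝓝 (0 : Fin s → ℂ), AnalyticAt ℂ (δ j) (ι y) :=
      hι0.eventually (hδ j).eventually_analyticAt
    filter_upwards [hmin l.length hl l.get j hj, hev2] with y h1 h2
    have h3 := iteratedFDeriv_eq_DD l.length h2 l.get
    rw [List.ofFn_get] at h3
    rw [← h3]
    exact h1
  -- main claim
  have claim : ∀ l : List (Fin r), ∃ E, Small e δ U l.length E ∧ ∀ x ∈ U,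
      DD l G x = (∑ j ∈ Finset.range (e + 1), DD l (δ j) x * F x ^ j) + E x := by
    intro l
    induction l with
    | nil =>
      refine ⟨fun _ => 0, Small.zero _, fun x hx => ?_⟩
      show G x = _ + 0
      rw [add_zero]
      rfl
    | cons i l IH =>
      obtain ⟨E, hE, heq⟩ := IH
      obtain ⟨E'', hE'', heq''⟩ := Small.dd_exists hδU i hE
      refine ⟨fun x => (∑ j ∈ Finset.range (e + 1),
          DD l (δ j) x * dd i (fun z => F z ^ j) x) + E'' x, ?_, ?_⟩
      · refine Small.add (Small.sum fun j hj => ?_) hE''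
        exact Small.base l j (dd i (fun z => F z ^ j)) (Nat.lt_succ_self _)
          (Nat.lt_succ_iff.mp (Finset.mem_range.mp hj))
          (fun x hx => analyticAt_dd i ((hFU x hx).pow j))
      · intro x hx
        have hdiffsum : ∀ j ∈ Finset.range (e + 1),
            DifferentiableAt ℂ (fun z => DD l (δ j) z * F z ^ j) x := fun j hj =>
          ((analyticAt_DD l (hδU j (Nat.lt_succ_iff.mp (Finset.mem_range.mp hj)) x hx)).mul
            ((hFU x hx).pow j)).differentiableAt
        have hloc : DD l G =ᶠ[𝓝 x] fun z =>
            (∑ j ∈ Finset.range (e + 1), DD l (δ j) z * F z ^ j) + E z :=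
          eventually_of_mem (hUopen.mem_nhds hx) heq
        show dd i (DD l G) x = _
        rw [dd_congr hloc, dd_add (DifferentiableAt.fun_sum hdiffsum)
          ((hE.analytic hδU x hx).differentiableAt), dd_sum hdiffsum, heq'' x hx]
        have hterm : ∀ j ∈ Finset.range (e + 1),
            dd i (fun z => DD l (δ j) z * F z ^ j) x
            = DD (i :: l) (δ j) x * F x ^ j + DD l (δ j) x * dd i (fun z => F z ^ j) x :=
          fun j hj => dd_mul
            ((analyticAt_DD l (hδU j (Nat.lt_succ_iff.mp (Finset.mem_range.mp hj)) x hx)).differentiableAt)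
            (((hFU x hx).pow j).differentiableAt)
        rw [Finset.sum_congr rfl hterm, Finset.sum_add_distrib, add_assoc]
  -- conclude
  refine ⟨Nat.find hex, dir, ⟨j0, hj0e, hj0⟩, ?_⟩
  obtain ⟨E, hE, heq⟩ := claim (List.ofFn dir)
  rw [List.length_ofFn] at hE
  have hvan : ∀ᶠ y in 𝓝 (0 : Fin s → ℂ), E (ι y) = 0 := hE.vanish ι HminDD le_rfl
  have hU' : ∀ᶠ y in 𝓝 (0 : Fin s → ℂ), ι y ∈ U := hι0.eventually
    (eventually_of_mem (hUopen.mem_nhds hU0) fun z hz => hz)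
  filter_upwards [hvan, hU'] with y h1 h2
  have h3 := heq (ι y) h2
  rw [DD_eqOn_zero hUopen hG0 (List.ofFn dir) (ι y) h2, h1, add_zero] at h3
  have h4 : ∀ j ∈ Finset.range (e + 1),
      iteratedFDeriv ℂ (Nat.find hex) (δ j) (ι y) (fun i => Pi.single (dir i) 1)
      = DD (List.ofFn dir) (δ j) (ι y) := fun j hj =>
    iteratedFDeriv_eq_DD (Nat.find hex) (hδU j (Nat.lt_succ_iff.mp (Finset.mem_range.mp hj)) (ι y) h2) dir
  rw [Finset.sum_congr rfl fun j hj => by rw [h4 j hj]]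
  exact h3.symm
end

section
/- Let h(Z̃, Ẑ) = (h_1(Z̃, Ẑ), h_2(Z̃, Ẑ)) : (ℂ^{N−k} × ℂ^k, 0) → (ℂ^{N−k} × ℂ^k, 0) be a germ of a biholomorphism mapping M̃ × ℂ^k into M̃' × ℂ^k, where M̃, M̃' ⊂ ℂ^{N−k} are germs of real-analytic generic submanifolds through 0 and M̃' is holomorphically nondegenerate. Then h_1 is independent of Ẑ, i.e., ∂h_1/∂Ẑ_j ≡ 0 for j = 1,...,k. -/
open Filter Topology

/-- The Wirtinger derivative `∂ρ/∂Z_j` of a (real-differentiable) function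
`ρ : ℂ^q → ℂ`. -/
noncomputable def wirt {q : ℕ} (j : Fin q) (ρ : (Fin q → ℂ) → ℂ) (z : Fin q → ℂ) : ℂ :=
  (fderiv ℝ ρ z (Pi.single j 1) - Complex.I * fderiv ℝ ρ z (Pi.single j Complex.I)) / 2

/-- `M ⊆ ℂ^q` is a real-analytic generic submanifold of codimension `d`. -/
def IsRAGeneric {q : ℕ} (M : Set (Fin q → ℂ)) (d : ℕ) : Prop :=
  ∀ p ∈ M, ∃ ρ : (Fin q → ℂ) → (Fin d → ℝ),
    AnalyticAt ℝ ρ p ∧ (∀ᶠ z in 𝓝 p, (z ∈ M ↔ ρ z = 0)) ∧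
    LinearIndependent ℂ
      (fun i : Fin d => fun j : Fin q => wirt j (fun z => ((ρ z i : ℝ) : ℂ)) p)

/-- A holomorphic vector field `a` (defined near `0`) is tangent to `M` near `0` if it
annihilates every real-analytic function vanishing on `M` near `0`, at points of `M`. -/
def HoloTangent {q : ℕ} (M : Set (Fin q → ℂ)) (a : (Fin q → ℂ) → (Fin q → ℂ)) : Prop :=
  ∀ ρ : (Fin q → ℂ) → ℂ, AnalyticAt ℝ ρ 0 → (∀ᶠ z in 𝓝 (0 : Fin q → ℂ), z ∈ M → ρ z = 0) →
    ∀ᶠ z in 𝓝 (0 : Fin q → ℂ), z ∈ M → ∑ j, a z j * wirt j ρ z = 0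

/-- `M` is holomorphically nondegenerate (at `0`): the only germ at `0` of a holomorphic
vector field tangent to `M` is the zero vector field. -/
def HoloNondeg {q : ℕ} (M : Set (Fin q → ℂ)) : Prop :=
  ∀ a : (Fin q → ℂ) → (Fin q → ℂ), AnalyticAt ℂ a 0 → HoloTangent M a →
    ∀ᶠ z in 𝓝 (0 : Fin q → ℂ), a z = 0

private lemma ckey (r i A B : ℂ) :
    (r * A + i * B - Complex.I * (r * B - i * A)) / 2
      = (r + i * Complex.I) * ((A - Complex.I * B) / 2) := by
  linear_combination (i * B / 2) * Complex.I_sq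

lemma wirt_expand {q : ℕ} (ρ : (Fin q → ℂ) → ℂ) (z w : Fin q → ℂ) :
    (fderiv ℝ ρ z w - Complex.I * fderiv ℝ ρ z (Complex.I • w)) / 2
      = ∑ l, w l * wirt l ρ z := by
  set φ := fderiv ℝ ρ z with hφ
  have hw : w = ∑ l, ((w l).re • (Pi.single l (1:ℂ) : Fin q → ℂ)
      + (w l).im • (Pi.single l Complex.I : Fin q → ℂ)) := by
    funext m
    rw [Finset.sum_apply]
    have h1 : ∀ l, ((w l).re • (Pi.single l (1:ℂ) : Fin q → ℂ)
        + (w l).im • (Pi.single l Complex.I : Fin q → ℂ)) m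
        = (Pi.single l (w l) : Fin q → ℂ) m := by
      intro l
      by_cases hm : m = l
      · subst hm
        simp [Pi.single_apply, Complex.real_smul]
      · simp [Pi.single_apply, hm]
    rw [Finset.sum_congr rfl fun l _ => h1 l]
    have := congrFun (Finset.univ_sum_single w) m
    rw [Finset.sum_apply] at this
    rw [this]
  have hIw : Complex.I • w
      = ∑ l, ((w l).re • (Pi.single l Complex.I : Fin q → ℂ)
        - (w l).im • (Pi.single l (1:ℂ) : Fin q → ℂ)) := by
    funext m
    rw [Finset.sum_apply]
    have h1 : ∀ l, ((w l).re • (Pi.single l Complex.I : Fin q → ℂ)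
        - (w l).im • (Pi.single l (1:ℂ) : Fin q → ℂ)) m
        = (Pi.single l (Complex.I * w l) : Fin q → ℂ) m := by
      intro l
      by_cases hm : m = l
      · subst hm
        simp only [Pi.sub_apply, Pi.smul_apply, Pi.single_eq_same, Complex.real_smul,
          smul_eq_mul, mul_one]
        conv_rhs => rw [← Complex.re_add_im (w m)]
        linear_combination (-((w m).im : ℂ)) * Complex.I_sq
      · simp [Pi.single_apply, hm]
    rw [Finset.sum_congr rfl fun l _ => h1 l]
    have := congrFun (Finset.univ_sum_single (fun l => Complex.I * w l)) m
    rw [Finset.sum_apply] at this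
    rw [this]
    simp
  calc (φ w - Complex.I * φ (Complex.I • w)) / 2
      = (φ (∑ l, ((w l).re • (Pi.single l (1:ℂ) : Fin q → ℂ)
          + (w l).im • (Pi.single l Complex.I : Fin q → ℂ)))
        - Complex.I * φ (∑ l, ((w l).re • (Pi.single l Complex.I : Fin q → ℂ)
          - (w l).im • (Pi.single l (1:ℂ) : Fin q → ℂ)))) / 2 := by rw [← hw, ← hIw]
    _ = ∑ l, w l * wirt l ρ z := by
        rw [map_sum, map_sum]
        simp only [map_add, map_sub, map_smul]
        rw [Finset.mul_sum, ← Finset.sum_sub_distrib, Finset.sum_div]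
        refine Finset.sum_congr rfl fun l _ => ?_
        simp only [wirt, ← hφ, smul_eq_mul, Complex.real_smul]
        conv_rhs => rw [← Complex.re_add_im (w l)]
        exact ckey _ _ _ _

lemma fderiv_dir_zero {E F : Type*} [NormedAddCommGroup E] [NormedSpace ℝ E]
    [NormedAddCommGroup F] [NormedSpace ℝ F]
    {f : E → F} {p : E} (hf : DifferentiableAt ℝ f p) {w : E}
    (h0 : ∀ᶠ t : ℝ in 𝓝 0, f (p + t • w) = 0) :
    fderiv ℝ f p w = 0 := by
  have hγ : HasDerivAt (fun t : ℝ => p + t • w) w 0 := by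
    simpa using ((hasDerivAt_id (0:ℝ)).smul_const w).const_add p
  have hc : HasDerivAt (fun t : ℝ => f (p + t • w)) (fderiv ℝ f p w) 0 := by
    have hp : p + (0:ℝ) • w = p := by simp
    have hF : HasFDerivAt f (fderiv ℝ f p) (p + (0:ℝ) • w) := by rw [hp]; exact hf.hasFDerivAt
    exact hF.comp_hasDerivAt 0 hγ
  have hz : HasDerivAt (fun t : ℝ => f (p + t • w)) 0 0 :=
    (hasDerivAt_const (0:ℝ) (0:F)).congr_of_eventuallyEq h0
  exact hc.unique hz

lemma chain_wirt {q k : ℕ} {h : (Fin q → ℂ) × (Fin k → ℂ) → (Fin q → ℂ) × (Fin k → ℂ)}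
    {p : (Fin q → ℂ) × (Fin k → ℂ)} (hh : DifferentiableAt ℂ h p)
    {ρ : (Fin q → ℂ) → ℂ} (hρ : DifferentiableAt ℝ ρ ((h p).1)) (j : Fin k) :
    (fderiv ℝ (fun x => ρ (h x).1) p ((0 : Fin q → ℂ), Pi.single j 1)
      - Complex.I * fderiv ℝ (fun x => ρ (h x).1) p ((0 : Fin q → ℂ), Pi.single j Complex.I)) / 2
    = ∑ l, (fderiv ℂ h p ((0 : Fin q → ℂ), Pi.single j 1)).1 l * wirt l ρ ((h p).1) := by
  set D := fderiv ℂ h p with hD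
  set fstL := ContinuousLinearMap.fst ℂ (Fin q → ℂ) (Fin k → ℂ) with hfst
  have HD1 : HasFDerivAt (fun x => (h x).1) (fstL.comp D) p :=
    fstL.hasFDerivAt.comp p hh.hasFDerivAt
  set φ := fderiv ℝ ρ ((h p).1) with hφ
  have Hcomp : HasFDerivAt (fun x => ρ (h x).1)
      (φ.comp ((fstL.comp D).restrictScalars ℝ)) p :=
    hρ.hasFDerivAt.comp p (HD1.restrictScalars ℝ)
  have hfd := Hcomp.fderiv
  have heval : ∀ v : (Fin q → ℂ) × (Fin k → ℂ),
      fderiv ℝ (fun x => ρ (h x).1) p v = φ ((D v).1) := by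
    intro v; rw [hfd]; rfl
  have hI : ((0 : Fin q → ℂ), Pi.single j Complex.I)
      = Complex.I • ((0 : Fin q → ℂ), (Pi.single j 1 : Fin k → ℂ)) := by
    refine Prod.ext (by simp) ?_
    simp only [Prod.smul_snd]
    funext m
    by_cases hm : m = j
    · subst hm; simp
    · simp [Pi.single_apply, hm]
  rw [heval, heval, hI, map_smul]
  have : (Complex.I • D ((0 : Fin q → ℂ), (Pi.single j 1 : Fin k → ℂ))).1
      = Complex.I • (D ((0 : Fin q → ℂ), (Pi.single j 1 : Fin k → ℂ))).1 := rfl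
  rw [this]
  exact wirt_expand ρ ((h p).1) _

lemma grad_surj {q d : ℕ} {ρ : (Fin q → ℂ) → (Fin d → ℝ)} (hρ : AnalyticAt ℝ ρ 0)
    (hind : LinearIndependent ℂ
      (fun i : Fin d => fun j : Fin q => wirt j (fun z => ((ρ z i : ℝ) : ℂ)) 0)) :
    Function.Surjective (fderiv ℝ ρ 0) := by
  set T := fderiv ℝ ρ 0 with hT
  by_contra hns
  have hlt : LinearMap.range (T : (Fin q → ℂ) →ₗ[ℝ] (Fin d → ℝ)) < ⊤ := by
    rw [lt_top_iff_ne_top]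
    intro htop
    exact hns (LinearMap.range_eq_top.mp htop)
  obtain ⟨φ, hφ0, hker⟩ := (LinearMap.range (T : (Fin q → ℂ) →ₗ[ℝ] (Fin d → ℝ))).exists_le_ker_of_lt_top hlt
  set c : Fin d → ℝ := fun i => φ (Pi.single i 1) with hc
  have hsingle : ∀ (y : Fin d → ℝ) (i : Fin d),
      (Pi.single i (y i) : Fin d → ℝ) = (y i) • (Pi.single i 1 : Fin d → ℝ) := by
    intro y i; funext m
    by_cases hm : m = i
    · subst hm; simp
    · simp [Pi.single_apply, hm]
  have hphi : ∀ y : Fin d → ℝ, φ y = ∑ i, c i * y i := by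
    intro y
    conv_lhs => rw [← Finset.univ_sum_single y]
    rw [map_sum]
    refine Finset.sum_congr rfl fun i _ => ?_
    rw [hsingle y i, map_smul]
    simp [hc, mul_comm]
  have hsum : ∀ x : Fin q → ℂ, (∑ i, (c i : ℂ) * ((T x) i : ℂ)) = 0 := by
    intro x
    have h0 : φ (T x) = 0 := hker (LinearMap.mem_range.mpr ⟨x, rfl⟩)
    rw [hphi] at h0
    have : ((∑ i, c i * (T x) i : ℝ) : ℂ) = 0 := by rw [h0]; simp
    rw [← this]
    push_cast
    rfl
  have hfd_i : ∀ i, fderiv ℝ (fun z => ((ρ z i : ℝ) : ℂ)) 0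
      = Complex.ofRealCLM.comp ((ContinuousLinearMap.proj (R := ℝ) (φ := fun _ : Fin d => ℝ) i).comp T) := by
    intro i
    have h1 : HasFDerivAt ρ T 0 := hρ.differentiableAt.hasFDerivAt
    have h2 : HasFDerivAt (fun z => ρ z i)
        ((ContinuousLinearMap.proj (R := ℝ) (φ := fun _ : Fin d => ℝ) i).comp T) 0 :=
      (ContinuousLinearMap.proj (R := ℝ) (φ := fun _ : Fin d => ℝ) i).hasFDerivAt.comp 0 h1
    exact (Complex.ofRealCLM.hasFDerivAt.comp 0 h2).fderiv
  have hcomb : (∑ i, ((c i : ℂ)) • (fun j : Fin q => wirt j (fun z => ((ρ z i : ℝ) : ℂ)) 0))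
      = (0 : Fin q → ℂ) := by
    funext j
    rw [Finset.sum_apply]
    have hterm : ∀ i, ((c i : ℂ) • (fun j : Fin q => wirt j (fun z => ((ρ z i : ℝ) : ℂ)) 0)) j
        = (c i : ℂ) * ((T (Pi.single j 1)) i : ℂ) / 2
          - Complex.I * ((c i : ℂ) * ((T (Pi.single j Complex.I)) i : ℂ)) / 2 := by
      intro i
      simp only [Pi.smul_apply, smul_eq_mul, wirt, hfd_i i]
      simp only [ContinuousLinearMap.comp_apply, ContinuousLinearMap.proj_apply,
        Complex.ofRealCLM_apply]
      ring
    rw [Finset.sum_congr rfl fun i _ => hterm i]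
    rw [Finset.sum_sub_distrib, ← Finset.sum_div, ← Finset.sum_div, ← Finset.mul_sum]
    rw [hsum, hsum]
    simp
  have hzero := Fintype.linearIndependent_iff.mp hind (fun i => (c i : ℂ)) hcomb
  apply hφ0
  apply LinearMap.ext
  intro y
  rw [hphi]
  have : ∀ i, c i = 0 := fun i => by
    have h := hzero i
    exact_mod_cast h
  simp [this]

set_option maxHeartbeats 2000000 in
lemma lemA {E F : Type*} [NormedAddCommGroup E] [NormedSpace ℝ E] [FiniteDimensional ℝ E]
    [NormedAddCommGroup F] [NormedSpace ℝ F] [FiniteDimensional ℝ F]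
    {u v : E → F} {U V : E →L[ℝ] F}
    (hu : HasStrictFDerivAt u U 0) (hv : HasStrictFDerivAt v V 0)
    (hu0 : u 0 = 0) (hU : Function.Surjective U) (hV : Function.Surjective V)
    (huv : ∀ᶠ x in 𝓝 (0 : E), u x = 0 → v x = 0) :
    ∀ᶠ x in 𝓝 (0 : E), v x = 0 → u x = 0 := by
  -- right inverse of U
  obtain ⟨σl, hσl⟩ := (U : E →ₗ[ℝ] F).exists_rightInverse_of_surjective
    (LinearMap.range_eq_top.mpr hU)
  set σ : F →L[ℝ] E := LinearMap.toContinuousLinearMap σl with hσdef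
  have hσ : ∀ y, U (σ y) = y := by
    intro y
    have := LinearMap.ext_iff.mp hσl y
    simp at this; exact this
  -- the straightening map Φ
  set Φ : E → E := fun x => x - σ (U x) + σ (u x) with hΦdef
  have hB : HasStrictFDerivAt (fun x => σ (u x)) (σ.comp U) 0 := by
    have h0 : HasStrictFDerivAt σ (σ : F →L[ℝ] E) (u 0) := σ.hasStrictFDerivAt
    exact h0.comp 0 hu
  have hΦ' : HasStrictFDerivAt Φ
      (ContinuousLinearMap.id ℝ E - σ.comp U + σ.comp U) 0 := by
    exact ((hasStrictFDerivAt_id (0:E)).sub (σ.comp U).hasStrictFDerivAt).add hB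
  have hΦe : HasStrictFDerivAt Φ
      ((ContinuousLinearEquiv.refl ℝ E : E ≃L[ℝ] E) : E →L[ℝ] E) 0 := by
    simpa using hΦ'
  have hΦ0 : Φ 0 = 0 := by simp [hΦdef, hu0]
  have hUΦ : ∀ x, U (Φ x) = u x := by
    intro x
    simp [hΦdef, map_add, map_sub, hσ]
  set Ψ : E → E := hΦe.localInverse Φ _ 0 with hΨdef
  have hΨs : HasStrictFDerivAt Ψ
      ((ContinuousLinearEquiv.refl ℝ E : E ≃L[ℝ] E) : E →L[ℝ] E) 0 := by
    have := hΦe.to_localInverse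
    rw [hΦ0] at this
    simpa using this
  have hΨ0 : Ψ 0 = 0 := by
    have := hΦe.localInverse_apply_image
    rw [hΦ0] at this
    exact this
  have hΨc : ContinuousAt Ψ 0 := by
    have := hΦe.localInverse_continuousAt
    rw [hΦ0] at this
    exact this
  have hleft : ∀ᶠ x in 𝓝 (0:E), Ψ (Φ x) = x := hΦe.eventually_left_inverse
  have hright : ∀ᶠ y in 𝓝 (0:E), Φ (Ψ y) = y := by
    have := hΦe.eventually_right_inverse
    rw [hΦ0] at this
    exact this
  -- ker U ⊆ ker V
  have kerUV : ∀ e : E, U e = 0 → V e = 0 := by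
    intro e he
    have hΨd : DifferentiableAt ℝ Ψ 0 := hΨs.differentiableAt
    have hvΨd : DifferentiableAt ℝ (fun y => v (Ψ y)) 0 := by
      have hv0 : DifferentiableAt ℝ v (Ψ 0) := by rw [hΨ0]; exact hv.differentiableAt
      exact hv0.comp 0 hΨd
    have hfd : fderiv ℝ (fun y => v (Ψ y)) 0 = V.comp
        ((ContinuousLinearEquiv.refl ℝ E : E ≃L[ℝ] E) : E →L[ℝ] E) := by
      have hv0 : HasFDerivAt v V (Ψ 0) := by rw [hΨ0]; exact hv.hasFDerivAt
      exact (hv0.comp 0 hΨs.hasFDerivAt).fderiv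
    have hev : ∀ᶠ t : ℝ in 𝓝 0, (fun y => v (Ψ y)) ((0:E) + t • e) = 0 := by
      have htend : Tendsto (fun t : ℝ => t • e) (𝓝 0) (𝓝 (0:E)) := by
        have : Tendsto (fun t : ℝ => t • e) (𝓝 0) (𝓝 ((0:ℝ) • e)) :=
          (continuous_id.smul continuous_const).tendsto 0
        simpa using this
      have h1 : ∀ᶠ t : ℝ in 𝓝 0, Φ (Ψ (t • e)) = t • e := htend.eventually hright
      have htendΨ : Tendsto (fun t : ℝ => Ψ (t • e)) (𝓝 0) (𝓝 (0:E)) := by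
        have := hΨc.tendsto
        rw [hΨ0] at this
        exact this.comp htend
      have h2 : ∀ᶠ t : ℝ in 𝓝 0, u (Ψ (t • e)) = 0 → v (Ψ (t • e)) = 0 :=
        htendΨ.eventually huv
      filter_upwards [h1, h2] with t h1t h2t
      simp only [zero_add]
      apply h2t
      rw [← hUΦ (Ψ (t • e)), h1t, map_smul, he, smul_zero]
    have := fderiv_dir_zero hvΨd hev
    rw [hfd] at this
    simpa using this
  -- L := V ∘ σ is invertible
  set L : F →L[ℝ] F := V.comp σ with hLdef
  have hLU : ∀ x, L (U x) = V x := by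
    intro x
    have h1 : U (x - σ (U x)) = 0 := by simp [map_sub, hσ]
    have h2 : V (x - σ (U x)) = 0 := kerUV _ h1
    have : V x - V (σ (U x)) = 0 := by rw [← map_sub]; exact h2
    have := sub_eq_zero.mp this
    simp [hLdef, this]
  have hLsurj : Function.Surjective L := by
    intro y
    obtain ⟨x, hx⟩ := hV y
    exact ⟨U x, by rw [hLU x, hx]⟩
  have hLinj : Function.Injective (L : F →ₗ[ℝ] F) :=
    LinearMap.injective_iff_surjective.mpr hLsurj
  set Le : F ≃L[ℝ] F := (LinearEquiv.ofBijective (L : F →ₗ[ℝ] F)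
    ⟨hLinj, hLsurj⟩).toContinuousLinearEquiv with hLedef
  have hLe : ∀ w, Le w = L w := fun w => rfl
  set CN : ℝ := ‖(Le.symm : F →L[ℝ] F)‖ with hCN
  have hCNn : 0 ≤ CN := norm_nonneg _
  have hLlow : ∀ w : F, ‖w‖ ≤ CN * ‖L w‖ := by
    intro w
    calc ‖w‖ = ‖Le.symm (Le w)‖ := by rw [Le.symm_apply_apply]
    _ ≤ CN * ‖Le w‖ := (Le.symm : F →L[ℝ] F).le_opNorm _
    _ = CN * ‖L w‖ := by rw [hLe]
  -- constants
  set Cσ : ℝ := ‖σ‖ with hCσdef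
  set CV : ℝ := ‖V‖ with hCVdef
  have hCσn : (0:ℝ) ≤ Cσ := norm_nonneg _
  have hCVn : (0:ℝ) ≤ CV := norm_nonneg _
  set K : ℝ := CN * ((2 + CV) * Cσ) with hKdef
  have hKn : (0:ℝ) ≤ K := by positivity
  set ε : ℝ := min 1 ((2 * (K + 1))⁻¹) with hεdef
  have hεpos : (0:ℝ) < ε := lt_min one_pos (by positivity)
  have hε1 : ε ≤ 1 := min_le_left _ _
  have hε2 : ε ≤ (2 * (K + 1))⁻¹ := min_le_right _ _
  have h2a : (K + 1) * ε ≤ 1 / 2 := by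
    have hpos : (0:ℝ) < K + 1 := by positivity
    calc (K + 1) * ε ≤ (K + 1) * (2 * (K + 1))⁻¹ :=
          mul_le_mul_of_nonneg_left hε2 hpos.le
      _ = 1 / 2 := by field_simp
  -- strict differentiability bounds
  have hvb : ∀ᶠ p : E × E in 𝓝 ((0:E), (0:E)),
      ‖v p.1 - v p.2 - V (p.1 - p.2)‖ ≤ ε * ‖p.1 - p.2‖ :=
    hv.isLittleO.def hεpos
  have hΨb : ∀ᶠ p : E × E in 𝓝 ((0:E), (0:E)),
      ‖Ψ p.1 - Ψ p.2 - (p.1 - p.2)‖ ≤ ε * ‖p.1 - p.2‖ := by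
    have := hΨs.isLittleO.def hεpos
    simpa using this
  -- the projection-to-S map
  set Y : E → E := fun x => Ψ (Φ x - σ (u x)) with hYdef
  have hΦc : ContinuousAt Φ 0 := hΦe.differentiableAt.continuousAt
  have huc : ContinuousAt u 0 := hu.differentiableAt.continuousAt
  have hbtend : Tendsto (fun x => Φ x - σ (u x)) (𝓝 (0:E)) (𝓝 (0:E)) := by
    have h1 : Tendsto (fun x => Φ x - σ (u x)) (𝓝 (0:E)) (𝓝 (Φ 0 - σ (u 0))) :=
      (hΦc.sub ((σ.continuous.continuousAt).comp huc)).tendsto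
    rw [hΦ0, hu0] at h1
    simpa using h1
  have hYtend : Tendsto Y (𝓝 (0:E)) (𝓝 (0:E)) := by
    have := hΨc.tendsto
    rw [hΨ0] at this
    exact this.comp hbtend
  have hΦtend : Tendsto Φ (𝓝 (0:E)) (𝓝 (0:E)) := by
    have := hΦc.tendsto
    rw [hΦ0] at this
    exact this
  have ev1 : ∀ᶠ x in 𝓝 (0:E),
      ‖v x - v (Y x) - V (x - Y x)‖ ≤ ε * ‖x - Y x‖ :=
    (tendsto_id.prodMk_nhds hYtend).eventually hvb
  have ev2 : ∀ᶠ x in 𝓝 (0:E),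
      ‖Ψ (Φ x) - Ψ (Φ x - σ (u x)) - (Φ x - (Φ x - σ (u x)))‖
        ≤ ε * ‖Φ x - (Φ x - σ (u x))‖ :=
    (hΦtend.prodMk_nhds hbtend).eventually hΨb
  have ev3 : ∀ᶠ x in 𝓝 (0:E), Ψ (Φ x) = x := hleft
  have ev4 : ∀ᶠ x in 𝓝 (0:E), Φ (Y x) = Φ x - σ (u x) :=
    hbtend.eventually hright
  have ev5 : ∀ᶠ x in 𝓝 (0:E), u (Y x) = 0 → v (Y x) = 0 :=
    hYtend.eventually huv
  filter_upwards [ev1, ev2, ev3, ev4, ev5] with x h1 h2 h3 h4 h5 hvx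
  have hUy : u (Y x) = 0 := by
    rw [← hUΦ (Y x), h4, map_sub, hUΦ x, hσ, sub_self]
  have hvy : v (Y x) = 0 := h5 hUy
  have hσux : Φ x - (Φ x - σ (u x)) = σ (u x) := by abel
  rw [hσux, h3] at h2
  have h2' : ‖x - Y x - σ (u x)‖ ≤ ε * ‖σ (u x)‖ := h2
  rw [hvx, hvy] at h1
  have b2 : ‖V (x - Y x)‖ ≤ ε * ‖x - Y x‖ := by
    have he : (0:F) - 0 - V (x - Y x) = -(V (x - Y x)) := by abel
    rw [he, norm_neg] at h1
    exact h1
  have b3 : ‖x - Y x‖ ≤ (1 + ε) * ‖σ (u x)‖ := by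
    have htri : ‖x - Y x‖ ≤ ‖x - Y x - σ (u x)‖ + ‖σ (u x)‖ := by
      have := norm_add_le (x - Y x - σ (u x)) (σ (u x))
      simpa using this
    have he : ε * ‖σ (u x)‖ + ‖σ (u x)‖ = (1 + ε) * ‖σ (u x)‖ := by ring
    linarith
  have hLspl : L (u x) = V (x - Y x) - V (x - Y x - σ (u x)) := by
    rw [← map_sub]
    have : x - Y x - (x - Y x - σ (u x)) = σ (u x) := by abel
    rw [this]
    rfl
  have b4 : ‖L (u x)‖ ≤ ε * ‖x - Y x‖ + CV * (ε * ‖σ (u x)‖) := by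
    rw [hLspl]
    have htri : ‖V (x - Y x) - V (x - Y x - σ (u x))‖
        ≤ ‖V (x - Y x)‖ + ‖V (x - Y x - σ (u x))‖ := norm_sub_le _ _
    have hVb : ‖V (x - Y x - σ (u x))‖ ≤ CV * ‖x - Y x - σ (u x)‖ := V.le_opNorm _
    have hVb2 : CV * ‖x - Y x - σ (u x)‖ ≤ CV * (ε * ‖σ (u x)‖) :=
      mul_le_mul_of_nonneg_left h2' hCVn
    linarith
  have b5 : ‖σ (u x)‖ ≤ Cσ * ‖u x‖ := σ.le_opNorm _
  set n : ℝ := ‖u x‖ with hndef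
  have hnn : (0:ℝ) ≤ n := norm_nonneg _
  have c1 : n ≤ CN * ‖L (u x)‖ := hLlow (u x)
  have d1 : ε * ‖x - Y x‖ ≤ ε * ((1 + ε) * ‖σ (u x)‖) :=
    mul_le_mul_of_nonneg_left b3 hεpos.le
  have d2 : (1 + ε) * ‖σ (u x)‖ ≤ 2 * ‖σ (u x)‖ :=
    mul_le_mul_of_nonneg_right (by linarith) (norm_nonneg _)
  have d2' : ε * ((1 + ε) * ‖σ (u x)‖) ≤ ε * (2 * ‖σ (u x)‖) :=
    mul_le_mul_of_nonneg_left d2 hεpos.le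
  have d3 : ‖L (u x)‖ ≤ (2 + CV) * (ε * ‖σ (u x)‖) := by
    have he : ε * (2 * ‖σ (u x)‖) + CV * (ε * ‖σ (u x)‖) = (2 + CV) * (ε * ‖σ (u x)‖) := by
      ring
    linarith
  have d4 : ε * ‖σ (u x)‖ ≤ ε * (Cσ * n) := mul_le_mul_of_nonneg_left b5 hεpos.le
  have d5 : ‖L (u x)‖ ≤ (2 + CV) * (ε * (Cσ * n)) := by
    have := mul_le_mul_of_nonneg_left d4 (by linarith : (0:ℝ) ≤ 2 + CV)
    linarith
  have d6 : n ≤ CN * ((2 + CV) * (ε * (Cσ * n))) := by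
    calc n ≤ CN * ‖L (u x)‖ := c1
      _ ≤ CN * ((2 + CV) * (ε * (Cσ * n))) := mul_le_mul_of_nonneg_left d5 hCNn
  have d7 : CN * ((2 + CV) * (ε * (Cσ * n))) = K * (ε * n) := by
    rw [hKdef]; ring
  have d8 : K * (ε * n) ≤ (K + 1) * (ε * n) := by
    have hεn : (0:ℝ) ≤ ε * n := mul_nonneg hεpos.le hnn
    have he : (K + 1) * (ε * n) - K * (ε * n) = ε * n := by ring
    linarith
  have d9 : (K + 1) * (ε * n) ≤ (1 / 2) * n := by
    have h := mul_le_mul_of_nonneg_right h2a hnn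
    calc (K + 1) * (ε * n) = ((K + 1) * ε) * n := by ring
      _ ≤ (1 / 2) * n := h
  have hn0 : n ≤ 0 := by
    rw [d7] at d6
    linarith
  have : n = 0 := le_antisymm hn0 hnn
  exact norm_eq_zero.mp this

set_option maxHeartbeats 2000000 in
/-- Let `h = (h₁, h₂) : (ℂ^{N-k} × ℂ^k, 0) → (ℂ^{N-k} × ℂ^k, 0)` be a
germ of a biholomorphism mapping `M̃ × ℂ^k` into `M̃' × ℂ^k`, where `M̃, M̃'` are germs
at `0` of real-analytic generic submanifolds of `ℂ^{N-k}` (of the same codimension) and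
`M̃'` is holomorphically nondegenerate.  Then `h₁` is independent of `Ẑ`:
`∂h₁/∂Ẑ_j ≡ 0` near `0` for `j = 1, ..., k`. -/
theorem first_component_independent (q k d : ℕ)
    (M1 M2 : Set (Fin q → ℂ)) (h0M1 : (0 : Fin q → ℂ) ∈ M1) (h0M2 : (0 : Fin q → ℂ) ∈ M2)
    (hM1 : IsRAGeneric M1 d) (hM2 : IsRAGeneric M2 d) (hnd : HoloNondeg M2)
    (h : (Fin q → ℂ) × (Fin k → ℂ) → (Fin q → ℂ) × (Fin k → ℂ))
    (hh : AnalyticAt ℂ h 0) (hh0 : h 0 = 0)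
    (hinv : ∃ g : (Fin q → ℂ) × (Fin k → ℂ) → (Fin q → ℂ) × (Fin k → ℂ),
      AnalyticAt ℂ g 0 ∧ (∀ᶠ p in 𝓝 (0 : (Fin q → ℂ) × (Fin k → ℂ)), g (h p) = p) ∧
      (∀ᶠ p in 𝓝 (0 : (Fin q → ℂ) × (Fin k → ℂ)), h (g p) = p))
    (hmap : ∀ᶠ p : (Fin q → ℂ) × (Fin k → ℂ) in 𝓝 0, p.1 ∈ M1 → (h p).1 ∈ M2) :
    ∀ j : Fin k, ∀ᶠ p : (Fin q → ℂ) × (Fin k → ℂ) in 𝓝 0,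
      (fderiv ℂ h p ((0 : Fin q → ℂ), Pi.single j 1)).1 = 0 := by

  intro j
  obtain ⟨g, hg, hgh, hhg⟩ := hinv
  obtain ⟨ρ1, hρ1a, hρ1iff, hρ1ind⟩ := hM1 0 h0M1
  obtain ⟨ρ2, hρ2a, hρ2iff, hρ2ind⟩ := hM2 0 h0M2
  have hg0 : g 0 = 0 := by
    have := hgh.self_of_nhds
    rwa [hh0] at this
  set fstL : (Fin q → ℂ) × (Fin k → ℂ) →L[ℝ] (Fin q → ℂ) :=
    ContinuousLinearMap.fst ℝ (Fin q → ℂ) (Fin k → ℂ) with hfstL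
  set u : (Fin q → ℂ) × (Fin k → ℂ) → (Fin d → ℝ) := fun p => ρ1 p.1 with hu_def
  set v : (Fin q → ℂ) × (Fin k → ℂ) → (Fin d → ℝ) := fun p => ρ2 (h p).1 with hv_def
  -- strict derivatives
  have hρ1s : HasStrictFDerivAt ρ1 (fderiv ℝ ρ1 0) 0 :=
    (hρ1a.contDiffAt (n := 1)).hasStrictFDerivAt one_ne_zero
  have hρ2s : HasStrictFDerivAt ρ2 (fderiv ℝ ρ2 0) 0 :=
    (hρ2a.contDiffAt (n := 1)).hasStrictFDerivAt one_ne_zero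
  have hUs : HasStrictFDerivAt u ((fderiv ℝ ρ1 0).comp fstL) 0 :=
    hρ1s.comp 0 fstL.hasStrictFDerivAt
  have hUsurj : Function.Surjective ((fderiv ℝ ρ1 0).comp fstL) := by
    intro y
    obtain ⟨z, hz⟩ := grad_surj hρ1a hρ1ind y
    exact ⟨(z, 0), hz⟩
  set D0 : ((Fin q → ℂ) × (Fin k → ℂ)) →L[ℂ] ((Fin q → ℂ) × (Fin k → ℂ)) :=
    fderiv ℂ h 0 with hD0
  have hhs : HasStrictFDerivAt h (D0.restrictScalars ℝ) 0 :=
    ((hh.contDiffAt (n := 1)).hasStrictFDerivAt one_ne_zero).restrictScalars ℝ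
  have hh1s : HasStrictFDerivAt (fun p => (h p).1) (fstL.comp (D0.restrictScalars ℝ)) 0 :=
    fstL.hasStrictFDerivAt.comp 0 hhs
  have hVs : HasStrictFDerivAt v
      ((fderiv ℝ ρ2 0).comp (fstL.comp (D0.restrictScalars ℝ))) 0 := by
    have hρ2s' : HasStrictFDerivAt ρ2 (fderiv ℝ ρ2 0) ((h 0).1) := by
      rw [hh0]; exact hρ2s
    exact hρ2s'.comp 0 hh1s
  -- invertibility of D0
  have hDG : ∀ w, D0 (fderiv ℂ g 0 w) = w := by
    have hcomp : fderiv ℂ (h ∘ g) 0 = D0.comp (fderiv ℂ g 0) := by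
      rw [fderiv_comp 0 (by rw [hg0]; exact hh.differentiableAt) hg.differentiableAt, hg0]
    have hid : fderiv ℂ (h ∘ g) 0 = ContinuousLinearMap.id ℂ _ := by
      have heq : (h ∘ g) =ᶠ[𝓝 (0 : (Fin q → ℂ) × (Fin k → ℂ))] id := hhg
      rw [heq.fderiv_eq, fderiv_id]
    intro w
    have := congrArg (fun T : ((Fin q → ℂ) × (Fin k → ℂ)) →L[ℂ]
      ((Fin q → ℂ) × (Fin k → ℂ)) => T w) (hcomp.symm.trans hid)
    simpa using this
  have hVsurj : Function.Surjective
      ((fderiv ℝ ρ2 0).comp (fstL.comp (D0.restrictScalars ℝ))) := by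
    intro y
    obtain ⟨z, hz⟩ := grad_surj hρ2a hρ2ind y
    refine ⟨fderiv ℂ g 0 (z, 0), ?_⟩
    show fderiv ℝ ρ2 0 ((D0 (fderiv ℂ g 0 (z, 0))).1) = y
    rw [hDG]
    exact hz
  -- u vanishing at 0
  have hρ1_0 : ρ1 0 = 0 := (hρ1iff.self_of_nhds).mp h0M1
  have hu0' : u 0 = 0 := hρ1_0
  -- tendsto facts
  have htendh : Tendsto h (𝓝 0) (𝓝 (0 : (Fin q → ℂ) × (Fin k → ℂ))) := by
    have := hh.continuousAt.tendsto
    rwa [hh0] at this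
  have htendh1 : Tendsto (fun p => (h p).1) (𝓝 0) (𝓝 (0 : Fin q → ℂ)) :=
    (continuous_fst.tendsto (0 : (Fin q → ℂ) × (Fin k → ℂ))).comp htendh
  have hM1iff' : ∀ᶠ p : (Fin q → ℂ) × (Fin k → ℂ) in 𝓝 0, (p.1 ∈ M1 ↔ ρ1 p.1 = 0) :=
    (continuous_fst.tendsto (0 : (Fin q → ℂ) × (Fin k → ℂ))).eventually hρ1iff
  have hM2iffh : ∀ᶠ p : (Fin q → ℂ) × (Fin k → ℂ) in 𝓝 0,
      ((h p).1 ∈ M2 ↔ ρ2 (h p).1 = 0) := htendh1.eventually hρ2iff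
  have huv : ∀ᶠ p : (Fin q → ℂ) × (Fin k → ℂ) in 𝓝 0, u p = 0 → v p = 0 := by
    filter_upwards [hM1iff', hmap, hM2iffh] with p hp1 hp2 hp3 hup
    exact hp3.mp (hp2 (hp1.mpr hup))
  have hvu : ∀ᶠ p : (Fin q → ℂ) × (Fin k → ℂ) in 𝓝 0, v p = 0 → u p = 0 :=
    lemA hUs hVs hu0' hUsurj hVsurj huv
  -- the candidate vector field
  set A : (Fin q → ℂ) × (Fin k → ℂ) → (Fin q → ℂ) :=
    fun w => (fderiv ℂ h (g w) ((0 : Fin q → ℂ), Pi.single j 1)).1 with hAdef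
  obtain ⟨rh, hrhpos, hhan⟩ : ∃ r > 0, ∀ p ∈ Metric.ball (0 : (Fin q → ℂ) × (Fin k → ℂ)) r,
      AnalyticAt ℂ h p :=
    Metric.eventually_nhds_iff_ball.mp hh.eventually_analyticAt
  have hDan : AnalyticOnNhd ℂ (fderiv ℂ h)
      (Metric.ball (0 : (Fin q → ℂ) × (Fin k → ℂ)) rh) :=
    AnalyticOnNhd.fderiv (fun p hp => hhan p hp)
  have htendg : Tendsto g (𝓝 0) (𝓝 (0 : (Fin q → ℂ) × (Fin k → ℂ))) := by
    have := hg.continuousAt.tendsto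
    rwa [hg0] at this
  have hgball : ∀ᶠ w : (Fin q → ℂ) × (Fin k → ℂ) in 𝓝 0,
      g w ∈ Metric.ball (0 : (Fin q → ℂ) × (Fin k → ℂ)) rh :=
    htendg.eventually (Metric.isOpen_ball.eventually_mem (Metric.mem_ball_self hrhpos))
  obtain ⟨rA, hrApos, hgan⟩ : ∃ r > 0, ∀ w ∈ Metric.ball (0 : (Fin q → ℂ) × (Fin k → ℂ)) r,
      AnalyticAt ℂ g w ∧ g w ∈ Metric.ball (0 : (Fin q → ℂ) × (Fin k → ℂ)) rh :=
    Metric.eventually_nhds_iff_ball.mp (hg.eventually_analyticAt.and hgball)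
  set ev : (((Fin q → ℂ) × (Fin k → ℂ)) →L[ℂ] ((Fin q → ℂ) × (Fin k → ℂ))) →L[ℂ] (Fin q → ℂ) :=
    (ContinuousLinearMap.fst ℂ (Fin q → ℂ) (Fin k → ℂ)).comp
      (ContinuousLinearMap.apply ℂ ((Fin q → ℂ) × (Fin k → ℂ))
        ((0 : Fin q → ℂ), Pi.single j 1)) with hevdef
  have hAan : ∀ w ∈ Metric.ball (0 : (Fin q → ℂ) × (Fin k → ℂ)) rA, AnalyticAt ℂ A w := by
    intro w hw
    obtain ⟨hgw, hgwball⟩ := hgan w hw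
    have h2 : AnalyticAt ℂ (fun w => fderiv ℂ h (g w)) w := (hDan _ hgwball).comp hgw
    exact (ev.analyticAt _).comp h2
  -- the good set of parameters c
  have htendc : Tendsto (fun c : Fin k → ℂ => (((0 : Fin q → ℂ), c) : (Fin q → ℂ) × (Fin k → ℂ)))
      (𝓝 0) (𝓝 (0 : (Fin q → ℂ) × (Fin k → ℂ))) := by
    have hcont : Continuous (fun c : Fin k → ℂ =>
        (((0 : Fin q → ℂ), c) : (Fin q → ℂ) × (Fin k → ℂ))) :=
      continuous_const.prodMk continuous_id
    exact hcont.tendsto 0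
  have htendgc : Tendsto (fun c : Fin k → ℂ => g ((0 : Fin q → ℂ), c)) (𝓝 0)
      (𝓝 (0 : (Fin q → ℂ) × (Fin k → ℂ))) := htendg.comp htendc
  have P1 : ∀ᶠ c : Fin k → ℂ in 𝓝 0,
      ∀ᶠ w in 𝓝 (((0 : Fin q → ℂ), c) : (Fin q → ℂ) × (Fin k → ℂ)), h (g w) = w :=
    htendc.eventually (eventually_eventually_nhds.mpr hhg)
  have P2 : ∀ᶠ c : Fin k → ℂ in 𝓝 0, AnalyticAt ℂ g ((0 : Fin q → ℂ), c) :=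
    htendc.eventually hg.eventually_analyticAt
  have P3 : ∀ᶠ c : Fin k → ℂ in 𝓝 0,
      ∀ᶠ p in 𝓝 (g ((0 : Fin q → ℂ), c)), AnalyticAt ℂ h p :=
    htendgc.eventually (eventually_eventually_nhds.mpr hh.eventually_analyticAt)
  have P4 : ∀ᶠ c : Fin k → ℂ in 𝓝 0,
      ∀ᶠ p in 𝓝 (g ((0 : Fin q → ℂ), c)), (v p = 0 → u p = 0) :=
    htendgc.eventually (eventually_eventually_nhds.mpr hvu)
  have hM1mem : ∀ᶠ p : (Fin q → ℂ) × (Fin k → ℂ) in 𝓝 0, (u p = 0 → p.1 ∈ M1) := by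
    filter_upwards [hM1iff'] with p hp hup
    exact hp.mpr hup
  have P5 : ∀ᶠ c : Fin k → ℂ in 𝓝 0,
      ∀ᶠ p in 𝓝 (g ((0 : Fin q → ℂ), c)), (u p = 0 → p.1 ∈ M1) :=
    htendgc.eventually (eventually_eventually_nhds.mpr hM1mem)
  have P6 : ∀ᶠ c : Fin k → ℂ in 𝓝 0,
      ∀ᶠ p in 𝓝 (g ((0 : Fin q → ℂ), c)), (p.1 ∈ M1 → (h p).1 ∈ M2) :=
    htendgc.eventually (eventually_eventually_nhds.mpr hmap)
  have P7 : ∀ᶠ c : Fin k → ℂ in 𝓝 0, ‖c‖ < rA / 2 := by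
    have hev : ∀ᶠ c : Fin k → ℂ in 𝓝 0, c ∈ Metric.ball (0 : Fin k → ℂ) (rA / 2) :=
      Metric.isOpen_ball.eventually_mem (Metric.mem_ball_self (by positivity))
    filter_upwards [hev] with c hc
    simpa [Metric.mem_ball, dist_zero_right] using hc
  have key : ∀ᶠ c : Fin k → ℂ in 𝓝 0,
      ∀ z ∈ Metric.ball (0 : Fin q → ℂ) (rA / 2), A (z, c) = 0 := by
    filter_upwards [P1, P2, P3, P4, P5, P6, P7] with c hP1 hP2 hP3 hP4 hP5 hP6 hP7
    have hslice : ∀ z ∈ Metric.ball (0 : Fin q → ℂ) (rA / 2),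
        AnalyticAt ℂ (fun z => A (z, c)) z := by
      intro z hz
      have hmem : (((z, c)) : (Fin q → ℂ) × (Fin k → ℂ))
          ∈ Metric.ball (0 : (Fin q → ℂ) × (Fin k → ℂ)) rA := by
        rw [Metric.mem_ball] at hz ⊢
        rw [Prod.dist_eq]
        apply max_lt
        · show dist z 0 < rA
          linarith
        · show dist c 0 < rA
          rw [dist_zero_right]
          linarith
      have hzc : AnalyticAt ℂ (fun z : Fin q → ℂ =>
          (((z, c)) : (Fin q → ℂ) × (Fin k → ℂ))) z :=
        (analyticAt_id).prod analyticAt_const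
      exact AnalyticAt.comp (g := A)
        (f := fun z : Fin q → ℂ => ((z, c) : (Fin q → ℂ) × (Fin k → ℂ)))
        (hAan _ hmem) hzc
    have htan : HoloTangent M2 (fun z => A (z, c)) := by
      intro ρ' hρ'a hρ'van
      set pc := g ((0 : Fin q → ℂ), c) with hpc
      have hpc_h : h pc = ((0 : Fin q → ℂ), c) := hP1.self_of_nhds
      have hhan_pc : AnalyticAt ℂ h pc := hP3.self_of_nhds
      have htendh1c : Tendsto (fun p : (Fin q → ℂ) × (Fin k → ℂ) => (h p).1) (𝓝 pc)
          (𝓝 (0 : Fin q → ℂ)) := by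
        have h1 : Tendsto h (𝓝 pc) (𝓝 (h pc)) := hhan_pc.continuousAt.tendsto
        rw [hpc_h] at h1
        exact (continuous_fst.tendsto _).comp h1
      set ψ : (Fin q → ℂ) × (Fin k → ℂ) → ℂ := fun p => ρ' ((h p).1) with hψdef
      have F1 : ∀ᶠ p in 𝓝 pc, (u p = 0 → ψ p = 0) := by
        filter_upwards [hP5, hP6, htendh1c.eventually hρ'van] with p h5 h6 h7 hup
        exact h7 (h6 (h5 hup))
      have F2 : ∀ᶠ p in 𝓝 pc, DifferentiableAt ℝ ψ p := by
        filter_upwards [hP3, htendh1c.eventually hρ'a.eventually_analyticAt] with p h3 h7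
        have hd1 : DifferentiableAt ℝ (fun p : (Fin q → ℂ) × (Fin k → ℂ) => (h p).1) p :=
          (((ContinuousLinearMap.fst ℂ (Fin q → ℂ) (Fin k → ℂ)).differentiableAt).comp p
            h3.differentiableAt).restrictScalars ℝ
        exact (h7.differentiableAt).comp p hd1
      obtain ⟨r1, hr1pos, hball⟩ := Metric.eventually_nhds_iff_ball.mp (F1.and F2)
      have F3 : ∀ᶠ p in 𝓝 pc, u p = 0 →
          ∀ ζ : ℂ, fderiv ℝ ψ p ((0 : Fin q → ℂ), Pi.single j ζ) = 0 := by
        rw [Metric.eventually_nhds_iff_ball]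
        refine ⟨r1, hr1pos, fun p hp hup ζ => ?_⟩
        apply fderiv_dir_zero (hball p hp).2
        have htl : Tendsto (fun t : ℝ =>
            p + t • (((0 : Fin q → ℂ), Pi.single j ζ) : (Fin q → ℂ) × (Fin k → ℂ)))
            (𝓝 0) (𝓝 p) := by
          have hcont : Continuous (fun t : ℝ =>
              p + t • (((0 : Fin q → ℂ), Pi.single j ζ) : (Fin q → ℂ) × (Fin k → ℂ))) :=
            continuous_const.add (continuous_id.smul continuous_const)
          have := hcont.tendsto 0
          simpa using this
        filter_upwards [htl.eventually (Metric.isOpen_ball.eventually_mem hp)] with t ht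
        have hu' : u (p + t • (((0 : Fin q → ℂ), Pi.single j ζ) :
            (Fin q → ℂ) × (Fin k → ℂ))) = 0 := by
          show ρ1 (p + t • (((0 : Fin q → ℂ), Pi.single j ζ) :
            (Fin q → ℂ) × (Fin k → ℂ))).1 = 0
          have hfst : (p + t • (((0 : Fin q → ℂ), Pi.single j ζ) :
              (Fin q → ℂ) × (Fin k → ℂ))).1 = p.1 := by simp
          rw [hfst]
          exact hup
        exact (hball _ ht).1 hu'
      have F4 : ∀ᶠ p in 𝓝 pc, u p = 0 →
          ∑ l, (fderiv ℂ h p ((0 : Fin q → ℂ), Pi.single j 1)).1 l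
            * wirt l ρ' ((h p).1) = 0 := by
        filter_upwards [F3, hP3, htendh1c.eventually hρ'a.eventually_analyticAt]
          with p h3 hp3 h7 hup
        rw [← chain_wirt hp3.differentiableAt h7.differentiableAt j]
        have e1 := h3 hup 1
        have e2 := h3 hup Complex.I
        rw [hψdef] at e1 e2
        rw [e1, e2]
        simp
      have htendzc : Tendsto (fun z : Fin q → ℂ =>
          (((z, c)) : (Fin q → ℂ) × (Fin k → ℂ))) (𝓝 0)
          (𝓝 (((0 : Fin q → ℂ), c) : (Fin q → ℂ) × (Fin k → ℂ))) :=
        (continuous_id.prodMk continuous_const).tendsto _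
      have htendgz : Tendsto (fun z : Fin q → ℂ => g (z, c)) (𝓝 0) (𝓝 pc) :=
        (hP2.continuousAt.tendsto).comp htendzc
      have T1 := htendgz.eventually F4
      have T2 := htendzc.eventually hP1
      have T4 := htendgz.eventually hP4
      filter_upwards [T1, T2, hρ2iff, T4] with z h1 h2 h3 h4 hzM2
      have hvz : v (g (z, c)) = 0 := by
        show ρ2 (h (g (z, c))).1 = 0
        rw [h2]
        exact h3.mp hzM2
      have hsum := h1 (h4 hvz)
      rw [h2] at hsum
      exact hsum
    have hzero := hnd _ (hslice 0 (Metric.mem_ball_self (by positivity))) htan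
    have heq : Set.EqOn (fun z => A (z, c)) 0 (Metric.ball (0 : Fin q → ℂ) (rA / 2)) :=
      AnalyticOnNhd.eqOn_zero_of_preconnected_of_eventuallyEq_zero
        (fun z hz => hslice z hz) ((convex_ball _ _).isPreconnected)
        (Metric.mem_ball_self (by positivity)) hzero
    intro z hz
    exact heq hz
  obtain ⟨sc, hsc_mem, hsc⟩ := key.exists_mem
  have hA0 : ∀ᶠ w : (Fin q → ℂ) × (Fin k → ℂ) in 𝓝 0, A w = 0 := by
    have hmemE : (Metric.ball (0 : Fin q → ℂ) (rA / 2)) ×ˢ sc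
        ∈ 𝓝 (((0 : Fin q → ℂ), (0 : Fin k → ℂ)) : (Fin q → ℂ) × (Fin k → ℂ)) :=
      prod_mem_nhds (Metric.ball_mem_nhds _ (by positivity)) hsc_mem
    refine Filter.eventually_of_mem hmemE fun w hw => ?_
    have := hsc w.2 hw.2 w.1 hw.1
    simpa using this
  filter_upwards [hgh, htendh.eventually hA0] with p hp1 hp2
  rw [hAdef] at hp2
  simp only at hp2
  rw [hp1] at hp2
  exact hp2
end
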